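/- If x and z are Artin–Schreier elements of A with xz ≠ zx, then the F-subalgebra B = F[x, z] generated by x and z is a quaternion algebra over its center: the center K of B satisfies dim_F K ≤ 2 (K is either F·1 or a quadratic field extension of F), and B is a central simple K-algebra with dim_K B = 4; in particular B is a proper subalgebra of A. -/

import Mathlib

/-- `x` is an Artin–Schreier element: `x² + x ∈ F·1`. -/
def IsArtinSchreier (F : Type*) {A : Type*} [Field F] [Ring A] [Algebra F A] (x : A) : Prop :=
  x ^ 2 + x ∈ Set.range (algebraMap F A)

/-- `y` is a square-central element: `y² ∈ F·1`. -/
def IsSquareCentral (F : Type*) {A : Type*} [Field F] [Ring A] [Algebra F A] (y : A) : Prop :=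
  y ^ 2 ∈ Set.range (algebraMap F A)

/-- `(x, y, z, u)` is a quadruple of generators of the biquaternion algebra `A`. -/
def IsQuadruple (F : Type*) {A : Type*} [Field F] [Ring A] [Algebra F A]
    (q : A × A × A × A) : Prop :=
  match q with
  | (x, y, z, u) =>
    y ≠ 0 ∧ u ≠ 0 ∧
    IsArtinSchreier F x ∧ IsSquareCentral F y ∧
    IsArtinSchreier F z ∧ IsSquareCentral F u ∧
    x * y + y * x = y ∧ x * z = z * x ∧ x * u = u * x ∧
    y * z = z * y ∧ y * u = u * y ∧ z * u + u * z = u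


set_option maxHeartbeats 4000000

set_option synthInstance.maxHeartbeats 1000000 in
/-- If `x` and `z` are non-commuting Artin–Schreier elements of a biquaternion division
algebra `A`, then `B = F[x, z]` is a quaternion algebra over its center `K`: `dim_F K ≤ 2`
(`K` is `F·1` or a quadratic extension of `F`), `B` is a central simple `K`-algebra with
`dim_K B = 4`, and `B` is a proper subalgebra of `A`. -/
theorem adjoin_artinSchreier_isQuaternion (F A : Type*) [Field F] [CharP F 2]
    [DivisionRing A] [Algebra F A]
    (hcentral : Subalgebra.center F A = ⊥) (hdim : Module.finrank F A = 16)
    (hbiquat : ∃ q : A × A × A × A, IsQuadruple F q)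
    (x z : A) (hx : IsArtinSchreier F x) (hz : IsArtinSchreier F z)
    (hne : x * z ≠ z * x) :
    Module.finrank F (Subalgebra.center F (Algebra.adjoin F ({x, z} : Set A))) ≤ 2 ∧
    Algebra.IsCentral (Subring.center (Algebra.adjoin F ({x, z} : Set A)))
      (Algebra.adjoin F ({x, z} : Set A)) ∧
    IsSimpleRing (Algebra.adjoin F ({x, z} : Set A)) ∧
    Module.finrank (Subring.center (Algebra.adjoin F ({x, z} : Set A)))
      (Algebra.adjoin F ({x, z} : Set A)) = 4 ∧
    Algebra.adjoin F ({x, z} : Set A) ≠ ⊤ := by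
  classical
  obtain ⟨fa, hfa⟩ := hx
  obtain ⟨fb, hfb⟩ := hz
  haveI : CharP A 2 := charP_of_injective_algebraMap (algebraMap F A).injective 2
  have h2 : ∀ t : A, t + t = 0 := fun t => CharTwo.add_self_eq_zero t
  have flip : ∀ s t u : A, s + t = u → s = u + t := fun s t u h => by
    rw [← h, add_assoc, h2, add_zero]
  set a' : A := algebraMap F A fa with ha'def
  set b' : A := algebraMap F A fb with hb'def
  have ha : ∀ t : A, a' * t = t * a' := fun t => (Algebra.commutes fa t)
  have hb : ∀ t : A, b' * t = t * b' := fun t => (Algebra.commutes fb t)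
  have hxx : x * x = a' + x := flip _ _ _ (by rw [hfa, pow_two])
  have hzz : z * z = b' + z := flip _ _ _ (by rw [hfb, pow_two])
  set c : A := x * z + z * x with hcdef
  have hc0 : c ≠ 0 := by
    intro h
    apply hne
    have h1 : x * z = 0 + z * x := flip _ _ _ h
    rwa [zero_add] at h1
  have hxxl : ∀ t : A, x * (x * t) = a' * t + x * t := fun t => by
    rw [← mul_assoc, hxx, add_mul]
  have hzzl : ∀ t : A, z * (z * t) = b' * t + z * t := fun t => by
    rw [← mul_assoc, hzz, add_mul]
  have hcx : c * x = x * c + c := by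
    have key : c * x + x * c = c := by
      rw [hcdef]
      simp only [mul_add, add_mul, mul_assoc, hxxl, hxx]
      rw [ha z]
      abel_nf
      simp [two_smul, h2]
    have := flip _ _ _ key
    rwa [add_comm] at this
  have hcz : c * z = z * c + c := by
    have key : c * z + z * c = c := by
      rw [hcdef]
      simp only [mul_add, add_mul, mul_assoc, hzzl, hzz]
      rw [hb x]
      abel_nf
      simp [two_smul, h2]
    have := flip _ _ _ key
    rwa [add_comm] at this
  have hc2x : (c * c) * x = x * (c * c) := by
    calc (c * c) * x = c * (c * x) := by rw [mul_assoc]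
    _ = c * (x * c) + c * c := by rw [hcx, mul_add]
    _ = (c * x) * c + c * c := by rw [mul_assoc]
    _ = (x * c) * c + c * c + c * c := by rw [hcx, add_mul]
    _ = x * (c * c) := by rw [add_assoc, h2, add_zero, mul_assoc]
  have hc2z : (c * c) * z = z * (c * c) := by
    calc (c * c) * z = c * (c * z) := by rw [mul_assoc]
    _ = c * (z * c) + c * c := by rw [hcz, mul_add]
    _ = (c * z) * c + c * c := by rw [mul_assoc]
    _ = (z * c) * c + c * c + c * c := by rw [hcz, add_mul]
    _ = z * (c * c) := by rw [add_assoc, h2, add_zero, mul_assoc]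
  set α : A := x + z + c with hαdef
  have hαx : α * x = x * α := by
    rw [hαdef, hcdef]
    simp only [mul_add, add_mul, mul_assoc, hxxl, hxx]
    abel_nf
    simp only [two_smul, h2]
    simp [ha z, hb x, add_comm]
  have hαz : α * z = z * α := by
    rw [hαdef, hcdef]
    simp only [mul_add, add_mul, mul_assoc, hzzl, hzz]
    abel_nf
    simp only [two_smul, h2]
    simp [ha z, hb x, add_comm]
  set B : Subalgebra F A := Algebra.adjoin F ({x, z} : Set A) with hBdef
  have hxB : x ∈ B := Algebra.subset_adjoin (by simp)
  have hzB : z ∈ B := Algebra.subset_adjoin (by simp)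
  have hcB : c ∈ B := by rw [hcdef]; exact add_mem (mul_mem hxB hzB) (mul_mem hzB hxB)
  have hαB : α ∈ B := by rw [hαdef]; exact add_mem (add_mem hxB hzB) hcB
  -- Central elements of B
  set Central : A → Prop := fun k => k ∈ B ∧ ∀ t ∈ B, k * t = t * k with hCentraldef
  have hCmul : ∀ k l, Central k → Central l → Central (k * l) := by
    rintro k l ⟨hk1, hk2⟩ ⟨hl1, hl2⟩
    refine ⟨mul_mem hk1 hl1, fun t ht => ?_⟩
    rw [mul_assoc, hl2 t ht, ← mul_assoc, hk2 t ht, mul_assoc]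
  have hCadd : ∀ k l, Central k → Central l → Central (k + l) := by
    rintro k l ⟨hk1, hk2⟩ ⟨hl1, hl2⟩
    exact ⟨add_mem hk1 hl1, fun t ht => by rw [add_mul, mul_add, hk2 t ht, hl2 t ht]⟩
  have hCa : ∀ f : F, Central (algebraMap F A f) :=
    fun f => ⟨B.algebraMap_mem f, fun t _ => Algebra.commutes f t⟩
  have hC0 : Central 0 := by have := hCa 0; rwa [map_zero] at this
  have hC1 : Central 1 := by have := hCa 1; rwa [map_one] at this
  have hCa' : Central a' := hCa fa
  have centralOfGen : ∀ k : A, k ∈ B → k * x = x * k → k * z = z * k → Central k := by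
    intro k hkB hk1 hk2
    refine ⟨hkB, fun t ht => ?_⟩
    induction ht using Algebra.adjoin_induction with
    | mem t ht =>
      rcases ht with h | h
      · rw [h]; exact hk1
      · rw [Set.mem_singleton_iff] at h; rw [h]; exact hk2
    | algebraMap f => rw [Algebra.commutes]
    | add s t _ _ hs ht => rw [mul_add, add_mul, hs, ht]
    | mul s t _ _ hs ht => rw [← mul_assoc, hs, mul_assoc, ht, mul_assoc]
  have hCα : Central α := centralOfGen α hαB hαx hαz
  have hCc2 : Central (c * c) := centralOfGen (c * c) (mul_mem hcB hcB) hc2x hc2z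
  -- the representation predicate
  set R : A → Prop := fun s => ∃ k0 k1 k2 k3 : A, Central k0 ∧ Central k1 ∧ Central k2 ∧
    Central k3 ∧ s = k0 + k1 * x + k2 * c + k3 * (x * c) with hRdef
  have hRadd : ∀ s t, R s → R t → R (s + t) := by
    rintro s t ⟨k0, k1, k2, k3, c0, c1, c2, c3, rfl⟩ ⟨l0, l1, l2, l3, d0, d1, d2, d3, rfl⟩
    refine ⟨k0 + l0, k1 + l1, k2 + l2, k3 + l3, hCadd _ _ c0 d0, hCadd _ _ c1 d1,
      hCadd _ _ c2 d2, hCadd _ _ c3 d3, ?_⟩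
    simp only [add_mul]
    abel
  have hRx : ∀ s, R s → R (x * s) := by
    rintro s ⟨k0, k1, k2, k3, c0, c1, c2, c3, rfl⟩
    refine ⟨k1 * a', k0 + k1, k3 * a', k2 + k3, hCmul _ _ c1 hCa', hCadd _ _ c0 c1,
      hCmul _ _ c3 hCa', hCadd _ _ c2 c3, ?_⟩
    have e0 : x * k0 = k0 * x := (c0.2 x hxB).symm
    have e1 : x * (k1 * x) = k1 * a' + k1 * x := by
      rw [← mul_assoc, ← c1.2 x hxB, mul_assoc, hxx, mul_add]
    have e2 : x * (k2 * c) = k2 * (x * c) := by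
      rw [← mul_assoc, ← c2.2 x hxB, mul_assoc]
    have e3 : x * (k3 * (x * c)) = k3 * (a' * c) + k3 * (x * c) := by
      rw [← mul_assoc, ← c3.2 x hxB, mul_assoc, ← mul_assoc x x c, hxx, add_mul, mul_add]
    rw [mul_add, mul_add, mul_add, e0, e1, e2, e3]
    simp only [add_mul, mul_assoc]
    abel
  have hRc : ∀ s, R s → R (c * s) := by
    rintro s ⟨k0, k1, k2, k3, c0, c1, c2, c3, rfl⟩
    refine ⟨k2 * (c * c) + k3 * (c * c), k3 * (c * c), k0 + k1, k1,
      hCadd _ _ (hCmul _ _ c2 hCc2) (hCmul _ _ c3 hCc2), hCmul _ _ c3 hCc2,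
      hCadd _ _ c0 c1, c1, ?_⟩
    have e0 : c * k0 = k0 * c := (c0.2 c hcB).symm
    have e1 : c * (k1 * x) = k1 * (x * c) + k1 * c := by
      rw [← mul_assoc, ← c1.2 c hcB, mul_assoc, hcx, mul_add]
    have e2 : c * (k2 * c) = k2 * (c * c) := by
      rw [← mul_assoc, ← c2.2 c hcB, mul_assoc]
    have e3 : c * (k3 * (x * c)) = k3 * (c * c) * x + k3 * (c * c) := by
      have h1 : c * (x * c) = (c * c) * x + c * c := by
        rw [← mul_assoc, hcx, add_mul, mul_assoc, ← hc2x, mul_assoc]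
      rw [← mul_assoc, ← c3.2 c hcB, mul_assoc, h1, mul_add, ← mul_assoc]
    rw [mul_add, mul_add, mul_add, e0, e1, e2, e3]
    simp only [add_mul, mul_assoc]
    abel
  have hRcentral : ∀ k, Central k → ∀ s, R s → R (k * s) := by
    rintro k hk s ⟨k0, k1, k2, k3, c0, c1, c2, c3, rfl⟩
    exact ⟨k * k0, k * k1, k * k2, k * k3, hCmul _ _ hk c0, hCmul _ _ hk c1,
      hCmul _ _ hk c2, hCmul _ _ hk c3, by simp only [mul_add, mul_assoc]⟩
  have hR1 : R 1 := ⟨1, 0, 0, 0, hC1, hC0, hC0, hC0, by simp⟩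
  have hRall : ∀ s ∈ B, R s := by
    have key : ∀ s ∈ B, ∀ t, R t → R (s * t) := by
      intro s hs
      induction hs using Algebra.adjoin_induction with
      | mem s hsmem =>
        rcases hsmem with h | h
        · rw [h]; exact hRx
        · rw [Set.mem_singleton_iff] at h
          rw [h]
          intro t ht
          have hzdec : z = x + α + c := by
            rw [hαdef]
            abel_nf
            simp [two_smul, h2]
          rw [hzdec]
          simp only [add_mul]
          exact hRadd _ _ (hRadd _ _ (hRx t ht) (hRcentral α hCα t ht)) (hRc t ht)
      | algebraMap f => exact fun t ht => hRcentral _ (hCa f) t ht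
      | add s t _ _ hs ht => intro r hr; simp only [add_mul]; exact hRadd _ _ (hs r hr) (ht r hr)
      | mul s t _ _ hs ht => intro r hr; rw [mul_assoc]; exact hs _ (ht r hr)
    intro s hs
    have := key s hs 1 hR1
    rwa [mul_one] at this
  -- independence at the level of A
  have hindA : ∀ k0 k1 k2 k3 : A, Central k0 → Central k1 → Central k2 → Central k3 →
      k0 + k1 * x + k2 * c + k3 * (x * c) = 0 → k0 = 0 ∧ k1 = 0 ∧ k2 = 0 ∧ k3 = 0 := by
    intro k0 k1 k2 k3 c0 c1 c2 c3 hL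
    have expand : x * (k0 + k1 * x + k2 * c + k3 * (x * c)) +
        (k0 + k1 * x + k2 * c + k3 * (x * c)) * x = (k2 + k3 * x) * c := by
      have e0 : x * k0 = k0 * x := (c0.2 x hxB).symm
      have e1 : x * (k1 * x) = (k1 * x) * x := by
        rw [← mul_assoc, ← c1.2 x hxB, mul_assoc]
      have e2 : x * (k2 * c) = k2 * (x * c) := by
        rw [← mul_assoc, ← c2.2 x hxB, mul_assoc]
      have e2' : (k2 * c) * x = k2 * (x * c) + k2 * c := by
        rw [mul_assoc, hcx, mul_add]
      have e3 : x * (k3 * (x * c)) = k3 * (a' * c) + k3 * (x * c) := by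
        rw [← mul_assoc, ← c3.2 x hxB, mul_assoc, ← mul_assoc x x c, hxx, add_mul, mul_add]
      have e3' : (k3 * (x * c)) * x = k3 * (a' * c) := by
        rw [mul_assoc, mul_assoc, hcx, mul_add x (x * c) c, ← mul_assoc x x c, hxx, add_mul,
          add_assoc, h2 (x * c), add_zero]
      rw [mul_add, mul_add, mul_add, add_mul, add_mul, add_mul, e0, e1, e2, e2', e3, e3']
      simp only [add_mul, mul_assoc]
      abel_nf
      simp [two_smul, h2]
    rw [hL, mul_zero, zero_mul, add_zero] at expand
    have h23 : k2 + k3 * x = 0 := by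
      rcases mul_eq_zero.mp expand.symm with h | h
      · exact h
      · exact absurd h hc0
    have hk3 : k3 = 0 := by
      by_contra hk3ne
      have hxval : k3 * x = k2 := by
        have h1 := flip _ _ _ h23
        rw [zero_add] at h1
        exact h1.symm
      have hxeq : x = k3⁻¹ * k2 := by
        rw [← hxval, ← mul_assoc, inv_mul_cancel₀ hk3ne, one_mul]
      have hcomm : x * c = c * x := by
        have hk2c : Commute k2 c := (c2.2 c hcB)
        have hk3c : Commute k3 c := (c3.2 c hcB)
        have h1 : Commute (k3⁻¹ * k2) c := (hk3c.inv_left₀).mul_left hk2c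
        rw [hxeq]; exact h1
      rw [hcx] at hcomm
      exact hc0 (left_eq_add.mp hcomm)
    have hk2 : k2 = 0 := by rwa [hk3, zero_mul, add_zero] at h23
    rw [hk2, hk3, zero_mul, zero_mul, add_zero, add_zero] at hL
    have expand2 : c * (k0 + k1 * x) + (k0 + k1 * x) * c = k1 * c := by
      have e0 : c * k0 = k0 * c := (c0.2 c hcB).symm
      have e1 : c * (k1 * x) = k1 * (x * c) + k1 * c := by
        rw [← mul_assoc, ← c1.2 c hcB, mul_assoc, hcx, mul_add]
      rw [mul_add c k0 (k1 * x), add_mul k0 (k1 * x) c, e0, e1, mul_assoc k1 x c]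
      abel_nf
      simp [two_smul, h2]
    rw [hL, mul_zero, zero_mul, add_zero] at expand2
    have hk1 : k1 = 0 := by
      rcases mul_eq_zero.mp expand2.symm with h | h
      · exact h
      · exact absurd h hc0
    have hk0 : k0 = 0 := by rwa [hk1, zero_mul, add_zero] at hL
    exact ⟨hk0, hk1, hk2, hk3⟩
  -- finite dimensionality and division ring structure on B
  haveI hFDA : FiniteDimensional F A := FiniteDimensional.of_finrank_pos (by rw [hdim]; norm_num)
  haveI hFDB : FiniteDimensional F B := inferInstance
  have hBunit : ∀ w : B, w ≠ 0 → ∃ v : B, w * v = 1 ∧ v * w = 1 := by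
    intro w hw
    have hinj : Function.Injective (LinearMap.mulLeft F w) := by
      intro s t hst
      have h1 : w * s = w * t := hst
      exact mul_left_cancel₀ hw h1
    obtain ⟨v, hv⟩ := LinearMap.surjective_of_injective hinj 1
    have hv' : w * v = 1 := hv
    refine ⟨v, hv', ?_⟩
    have h1 : w * (v * w) = w * 1 := by rw [← mul_assoc, hv', one_mul, mul_one]
    exact mul_left_cancel₀ hw h1
  letI instDivB : DivisionRing B := DivisionRing.ofIsUnitOrEqZero (fun w => by
    by_cases hw : w = 0
    · exact Or.inr hw
    · obtain ⟨v, h1, h2'⟩ := hBunit w hw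
      exact Or.inl ⟨⟨w, v, h1, h2'⟩, rfl⟩)
  -- the center of B
  have memK : ∀ (k : A) (hk : Central k), (⟨k, hk.1⟩ : B) ∈ Subring.center B := by
    intro k hk
    rw [Subring.mem_center_iff]
    intro g
    exact Subtype.ext ((hk.2 g.1 g.2).symm)
  have centralOfMemK : ∀ w : B, w ∈ Subring.center B → Central (w : A) := by
    intro w hw
    refine ⟨w.2, fun t ht => ?_⟩
    have h1 := Subring.mem_center_iff.mp hw ⟨t, ht⟩
    exact congrArg Subtype.val h1.symm
  letI instFieldK : Field (Subring.center B) := Field.ofIsUnitOrEqZero (fun k => by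
    by_cases hk : k = 0
    · exact Or.inr hk
    · have hkv : (k : B) ≠ 0 := fun h => hk (Subtype.ext h)
      obtain ⟨v, h1, h2'⟩ := hBunit k hkv
      have hvc : v ∈ Subring.center B := by
        rw [Subring.mem_center_iff]
        intro g
        have hkc := Subring.mem_center_iff.mp k.2
        calc g * v = 1 * (g * v) := by rw [one_mul]
        _ = (v * (k : B)) * (g * v) := by rw [h2']
        _ = v * (((k : B) * g) * v) := by simp only [mul_assoc]
        _ = v * ((g * (k : B)) * v) := by rw [← hkc g]
        _ = (v * g) * ((k : B) * v) := by simp only [mul_assoc]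
        _ = (v * g) * 1 := by rw [h1]
        _ = v * g := by rw [mul_one]
      exact Or.inl ⟨⟨k, ⟨v, hvc⟩, Subtype.ext h1, Subtype.ext h2'⟩, rfl⟩)
  -- basis of B over its center
  set xB : B := ⟨x, hxB⟩
  set cB : B := ⟨c, hcB⟩
  set v4 : Fin 4 → B := ![1, xB, cB, xB * cB] with hv4def
  have hsmulK : ∀ (k : Subring.center B) (w : B), k • w = (k : B) * w := fun k w => rfl
  have hspan : ⊤ ≤ Submodule.span (Subring.center B) (Set.range v4) := by
    rintro w -
    obtain ⟨k0, k1, k2, k3, c0, c1, c2, c3, hw⟩ := hRall w.1 w.2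
    have hKi : ∀ i : Fin 4, v4 i ∈ Submodule.span (Subring.center B) (Set.range v4) :=
      fun i => Submodule.subset_span ⟨i, rfl⟩
    have hwB : w = (⟨⟨k0, c0.1⟩, memK k0 c0⟩ : Subring.center B) • v4 0 +
        (⟨⟨k1, c1.1⟩, memK k1 c1⟩ : Subring.center B) • v4 1 +
        (⟨⟨k2, c2.1⟩, memK k2 c2⟩ : Subring.center B) • v4 2 +
        (⟨⟨k3, c3.1⟩, memK k3 c3⟩ : Subring.center B) • v4 3 := by
      apply Subtype.ext
      simp only [hsmulK, hv4def]
      show (w : A) = k0 * 1 + k1 * x + k2 * c + k3 * (x * c)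
      rw [mul_one]
      exact hw
    rw [hwB]
    exact add_mem (add_mem (add_mem (Submodule.smul_mem _ _ (hKi 0))
      (Submodule.smul_mem _ _ (hKi 1))) (Submodule.smul_mem _ _ (hKi 2)))
      (Submodule.smul_mem _ _ (hKi 3))
  have hlin : LinearIndependent (Subring.center B) v4 := by
    rw [Fintype.linearIndependent_iff]
    intro g hg
    have hgA : ((g 0 : B) : A) + ((g 1 : B) : A) * x + ((g 2 : B) : A) * c +
        ((g 3 : B) : A) * (x * c) = 0 := by
      have h1 := congrArg (Subtype.val : B → A) hg
      rw [Fin.sum_univ_four] at h1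
      simp only [hsmulK, hv4def, Matrix.cons_val_zero, Matrix.cons_val_one, Matrix.head_cons,
        Matrix.cons_val_two, Matrix.cons_val_three, Matrix.tail_cons, mul_one] at h1
      exact h1
    have hres := hindA _ _ _ _ (centralOfMemK _ (g 0).2) (centralOfMemK _ (g 1).2)
      (centralOfMemK _ (g 2).2) (centralOfMemK _ (g 3).2) hgA
    intro i
    fin_cases i
    · exact Subtype.ext (Subtype.ext hres.1)
    · exact Subtype.ext (Subtype.ext hres.2.1)
    · exact Subtype.ext (Subtype.ext hres.2.2.1)
    · exact Subtype.ext (Subtype.ext hres.2.2.2)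
  have hdim4 : Module.finrank (Subring.center B) B = 4 := by
    have hbasis : Module.Basis (Fin 4) (Subring.center B) B := Module.Basis.mk hlin hspan
    rw [Module.finrank_eq_card_basis hbasis, Fintype.card_fin]
  -- tower F ⊆ K ⊆ B
  letI instAlgFK : Algebra F (Subring.center B) := RingHom.toAlgebra
    ((algebraMap F B).codRestrict (Subring.center B) (fun f => Subring.mem_center_iff.2
      (fun g => (Algebra.commutes f g).symm)))
  haveI instTowerFKB : IsScalarTower F (Subring.center B) B :=
    IsScalarTower.of_algebraMap_eq' rfl
  have htowerK : Module.finrank F (Subring.center B) * Module.finrank (Subring.center B) B =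
      Module.finrank F B := Module.finrank_mul_finrank F (Subring.center B) B
  have hKB : Module.finrank F (Subring.center B) * 4 = Module.finrank F B := by
    rw [← htowerK, hdim4]
  -- tower F ⊆ B ⊆ A
  letI instModBA : Module B A := Module.compHom A B.val.toRingHom
  haveI instTowerFBA : IsScalarTower F B A := ⟨fun f b a => by
    show ((f • b : B) : A) * a = f • (((b : B) : A) * a)
    rw [SetLike.val_smul, smul_mul_assoc]⟩
  haveI : Module.Finite B A := @Module.Finite.of_restrictScalars_finite F B A _ _ _ _ _ _ instTowerFBA _
  have htowerB : Module.finrank F B * Module.finrank B A = 16 := by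
    rw [@Module.finrank_mul_finrank F B A _ _ _ _ _ _ instTowerFBA _ _ _ _, hdim]
  -- the F-linear equivalence between the F-center and the center
  have eZK : (Subalgebra.center F B) ≃ₗ[F] (Subring.center B) :=
    { toFun := fun w => ⟨w.1, Subring.mem_center_iff.2 (Subalgebra.mem_center_iff.mp w.2)⟩
      invFun := fun w => ⟨w.1, Subalgebra.mem_center_iff.2 (Subring.mem_center_iff.mp w.2)⟩
      left_inv := fun w => rfl
      right_inv := fun w => rfl
      map_add' := fun s t => rfl
      map_smul' := fun r w => by
        apply Subtype.ext
        show (r • w : B) = algebraMap F B r * (w : B)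
        rw [Algebra.smul_def] }
  have hZKfin : Module.finrank F (Subalgebra.center F B) =
      Module.finrank F (Subring.center B) := eZK.finrank_eq
  -- B is proper
  have hBneTop : B ≠ ⊤ := by
    intro htop
    have hK1 : Module.finrank F (Subring.center B) ≤ 1 := by
      apply finrank_le_one (1 : Subring.center B)
      intro k
      have hkA : ((k : B) : A) ∈ Subalgebra.center F A := by
        rw [Subalgebra.mem_center_iff]
        intro g
        have hgB : g ∈ B := by rw [htop]; exact Algebra.mem_top
        have h1 := Subring.mem_center_iff.mp k.2 ⟨g, hgB⟩
        exact congrArg Subtype.val h1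
      rw [hcentral] at hkA
      obtain ⟨f, hf⟩ := Algebra.mem_bot.mp hkA
      refine ⟨f, ?_⟩
      apply Subtype.ext
      apply Subtype.ext
      show ((f • (1 : Subring.center B) : Subring.center B) : A) = ((k : B) : A)
      rw [Algebra.smul_def, mul_one]
      exact hf
    have h16 : Module.finrank F B = 16 := by
      have h1 : Subalgebra.toSubmodule B = ⊤ := by rw [htop]; rfl
      have h2' : Module.finrank F B = Module.finrank F A := by
        rw [← Subalgebra.finrank_toSubmodule, h1, finrank_top]
      rw [h2', hdim]
    rw [← hKB] at h16
    omega
  -- the dimension count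
  have hdvd : Module.finrank F B ∣ 16 := ⟨Module.finrank B A, htowerB.symm⟩
  have hne16 : Module.finrank F B ≠ 16 := by
    intro h
    apply hBneTop
    have h1 : Subalgebra.toSubmodule B = ⊤ := by
      apply Submodule.eq_top_of_finrank_eq
      rw [Subalgebra.finrank_toSubmodule, h, hdim]
    exact Algebra.toSubmodule_eq_top.mp h1
  have hKdvd : Module.finrank F (Subring.center B) ∣ 4 := by
    have h1 : Module.finrank F (Subring.center B) * 4 ∣ 4 * 4 := by
      rw [show 4 * 4 = 16 by norm_num, hKB]
      exact hdvd
    exact (Nat.mul_dvd_mul_iff_right (by norm_num : 0 < 4)).mp h1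
  have hKle : Module.finrank F (Subring.center B) ≤ 2 := by
    have h4 := Nat.le_of_dvd (by norm_num) hKdvd
    have hne4 : Module.finrank F (Subring.center B) ≠ 4 := by
      intro h
      apply hne16
      rw [← hKB, h]
    obtain ⟨e, he⟩ := hKdvd
    interval_cases h : Module.finrank F (Subring.center B) <;> omega
  -- conclusion
  refine ⟨?_, ?_, ?_, hdim4, hBneTop⟩
  · rw [hZKfin]; exact hKle
  · refine ⟨fun w hw => ?_⟩
    have h1 := Subalgebra.mem_center_iff.mp hw
    rw [Algebra.mem_bot]
    exact ⟨⟨w, Subring.mem_center_iff.2 h1⟩, rfl⟩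
  · exact DivisionRing.isSimpleRing B
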